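/- Let B = [b_{i₁,…,i_d}] ∈ ℝ₊^{m₁×⋯×m_d} (d ≥ 2, each m_j ≥ 2) be a nonnegative tensor with no zero slice, and let s_k ∈ ℝ^{m_k}, k ∈ [d], be positive vectors satisfying the compatibility condition. Let f̃ be the restriction of f̂ to U(s₁,…,s_d) and let f be the restriction of f̃ to V₀(s₁,…,s_d)^⊥. Then the following are equivalent: (1) f̃ attains a global minimum on U(s₁,…,s_d); (2) f̃ has a critical point; (3) f(x_l) → ∞ for every sequence x_l ∈ V₀(s₁,…,s_d)^⊥ with ‖x_l‖ → ∞; (4) the only x = (x₁,…,x_d) ∈ V₀(s₁,…,s_d)^⊥ satisfying x_{1,i₁}+⋯+x_{d,i_d} ≤ 0 whenever b_{i₁,…,i_d} > 0 is x = 0. -/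

import Mathlib

section

variable {d : ℕ} {m : Fin d → ℕ}

/-- The subspace `U(s₁,…,s_d) = {x : sₖᵀxₖ = 0 for all k}` of
`ℝ^{m₁} × ⋯ × ℝ^{m_d}`, realized inside `EuclideanSpace ℝ ((k : Fin d) × Fin (m k))`. -/
noncomputable def Usub (s : (k : Fin d) → Fin (m k) → ℝ) :
    Submodule ℝ (EuclideanSpace ℝ ((k : Fin d) × Fin (m k))) where
  carrier := {x | ∀ k : Fin d, ∑ i : Fin (m k), s k i * x ⟨k, i⟩ = 0}
  add_mem' := by
    intro a b ha hb k
    simp only [PiLp.add_apply, mul_add, Finset.sum_add_distrib, ha k, hb k, add_zero]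
  zero_mem' := by intro k; simp
  smul_mem' := by
    intro c a ha k
    have : ∀ i : Fin (m k), s k i * (c • a) ⟨k, i⟩ = c * (s k i * a ⟨k, i⟩) := by
      intro i; simp [PiLp.smul_apply, smul_eq_mul]; ring
    simp only [this, ← Finset.mul_sum, ha k, mul_zero]

/-- The subspace `V(s₁,…,s_d) = {x : x₁(i₁) + ⋯ + x_d(i_d) = 0 whenever B i > 0}`. -/
noncomputable def Vsub (B : ((j : Fin d) → Fin (m j)) → ℝ) :
    Submodule ℝ (EuclideanSpace ℝ ((k : Fin d) × Fin (m k))) where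
  carrier := {x | ∀ i : (j : Fin d) → Fin (m j), 0 < B i → ∑ k : Fin d, x ⟨k, i k⟩ = 0}
  add_mem' := by
    intro a b ha hb i hi
    simp only [PiLp.add_apply, Finset.sum_add_distrib, ha i hi, hb i hi, add_zero]
  zero_mem' := by intro i _; simp
  smul_mem' := by
    intro c a ha i hi
    have : ∀ k : Fin d, (c • a) ⟨k, i k⟩ = c * a ⟨k, i k⟩ := by
      intro k; simp [PiLp.smul_apply, smul_eq_mul]
    simp only [this, ← Finset.mul_sum, ha i hi, mul_zero]

/-- The orthogonal complement `V₀(s₁,…,s_d)^⊥` of `V₀ = V ∩ U` inside `U`. -/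
noncomputable def V0perp (B : ((j : Fin d) → Fin (m j)) → ℝ)
    (s : (k : Fin d) → Fin (m k) → ℝ) :
    Submodule ℝ (EuclideanSpace ℝ ((k : Fin d) × Fin (m k))) :=
  Usub s ⊓ (Vsub B ⊓ Usub s)ᗮ

/-- The function `f̂(x) = ∑_i B i · exp(x₁(i₁) + ⋯ + x_d(i_d))`. -/
noncomputable def fhat (B : ((j : Fin d) → Fin (m j)) → ℝ)
    (y : EuclideanSpace ℝ ((k : Fin d) × Fin (m k))) : ℝ :=
  ∑ i : (j : Fin d) → Fin (m j), B i * Real.exp (∑ k : Fin d, y ⟨k, i k⟩)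

/-! Auxiliary material for the proof -/


noncomputable def Lclm (i : (j : Fin d) → Fin (m j)) :
    EuclideanSpace ℝ ((k : Fin d) × Fin (m k)) →L[ℝ] ℝ :=
  ∑ k : Fin d, EuclideanSpace.proj ⟨k, i k⟩

lemma Lclm_apply (i : (j : Fin d) → Fin (m j)) (x : EuclideanSpace ℝ ((k : Fin d) × Fin (m k))) :
    Lclm i x = ∑ k : Fin d, x ⟨k, i k⟩ := by
  simp [Lclm, ContinuousLinearMap.sum_apply, PiLp.proj_apply]

lemma fhat_eq (B : ((j : Fin d) → Fin (m j)) → ℝ) :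
    fhat B = fun y => ∑ i : (j : Fin d) → Fin (m j), B i * Real.exp (Lclm i y) := by
  funext y; simp [fhat, Lclm_apply]

lemma fhat_hasFDerivAt (B : ((j : Fin d) → Fin (m j)) → ℝ)
    (x : EuclideanSpace ℝ ((k : Fin d) × Fin (m k))) :
    HasFDerivAt (fhat B)
      (∑ i : (j : Fin d) → Fin (m j), (B i * Real.exp (Lclm i x)) • Lclm i) x := by
  rw [fhat_eq]
  apply HasFDerivAt.fun_sum
  intro i _
  have h1 : HasFDerivAt (fun y => Real.exp (Lclm i y)) (Real.exp (Lclm i x) • Lclm i) x :=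
    (Lclm i).hasFDerivAt.exp
  simpa [smul_smul] using h1.const_mul (B i)

lemma fhat_continuous (B : ((j : Fin d) → Fin (m j)) → ℝ) : Continuous (fhat B) := by
  rw [fhat_eq]
  exact continuous_finset_sum _ fun i _ =>
    continuous_const.mul (Real.continuous_exp.comp (Lclm i).continuous)

lemma fhat_add_of_mem_Vsub (B : ((j : Fin d) → Fin (m j)) → ℝ)
    (hB : ∀ i, 0 ≤ B i)
    {v : EuclideanSpace ℝ ((k : Fin d) × Fin (m k))} (hv : v ∈ Vsub B)
    (w : EuclideanSpace ℝ ((k : Fin d) × Fin (m k))) :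
    fhat B (v + w) = fhat B w := by
  unfold fhat
  refine Finset.sum_congr rfl fun i _ => ?_
  rcases (hB i).eq_or_lt with h | h
  · rw [← h, zero_mul, zero_mul]
  · have hv0 : ∑ k : Fin d, v ⟨k, i k⟩ = 0 := hv i h
    congr 1
    rw [show ∑ k : Fin d, (v + w) ⟨k, i k⟩
        = (∑ k : Fin d, v ⟨k, i k⟩) + ∑ k : Fin d, w ⟨k, i k⟩ by
      simp [PiLp.add_apply, Finset.sum_add_distrib], hv0, zero_add]


lemma single_le_fhat (B : ((j : Fin d) → Fin (m j)) → ℝ) (hB : ∀ i, 0 ≤ B i)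
    (y : EuclideanSpace ℝ ((k : Fin d) × Fin (m k))) (i : (j : Fin d) → Fin (m j)) :
    B i * Real.exp (Lclm i y) ≤ fhat B y := by
  rw [fhat_eq]
  exact Finset.single_le_sum (f := fun j => B j * Real.exp (Lclm j y))
    (fun j _ => mul_nonneg (hB j) (Real.exp_pos _).le) (Finset.mem_univ i)

set_option maxHeartbeats 1000000 in
/-- Theorem 3.5 of the paper. For a nonnegative tensor `B` with no zero
slice and compatible positive vectors `s`, the following are equivalent: (1) the
restriction `f̃` of `f̂` to `U` attains a global minimum; (2) `f̃` has a critical point;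
(3) `f → ∞` along every sequence in `V₀^⊥` whose norms tend to `∞`; (4) the only
`x ∈ V₀^⊥` with `x₁(i₁)+⋯+x_d(i_d) ≤ 0` whenever `B i > 0` is `x = 0`. -/
theorem scaling_equivalent_conditions {d : ℕ} {m : Fin d → ℕ} (hd : 2 ≤ d)
    (hm : ∀ j, 2 ≤ m j)
    (B : ((j : Fin d) → Fin (m j)) → ℝ)
    (hB : ∀ i, 0 ≤ B i)
    (hslice : ∀ (k : Fin d) (ik : Fin (m k)),
      ∃ i : (j : Fin d) → Fin (m j), i k = ik ∧ B i ≠ 0)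
    (s : (k : Fin d) → Fin (m k) → ℝ) (hs : ∀ k i, 0 < s k i)
    (hcompat : ∀ k l : Fin d, ∑ i, s k i = ∑ i, s l i) :
    List.TFAE
      [ -- (1) `f̃` has a global minimum on `U`
        ∃ x ∈ Usub s, ∀ y ∈ Usub s, fhat B x ≤ fhat B y,
        -- (2) `f̃` has a critical point
        ∃ x ∈ Usub s, ∀ v ∈ Usub s, fderiv ℝ (fhat B) x v = 0,
        -- (3) `f` is coercive on `V₀(s₁,…,s_d)^⊥`
        ∀ x : ℕ → EuclideanSpace ℝ ((k : Fin d) × Fin (m k)),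
          (∀ l, x l ∈ V0perp B s) →
          Filter.Tendsto (fun l => ‖x l‖) Filter.atTop Filter.atTop →
          Filter.Tendsto (fun l => fhat B (x l)) Filter.atTop Filter.atTop,
        -- (4) the only solution of the inequalities in `V₀(s₁,…,s_d)^⊥` is `0`
        ∀ x ∈ V0perp B s,
          (∀ i : (j : Fin d) → Fin (m j), 0 < B i → ∑ k : Fin d, x ⟨k, i k⟩ ≤ 0) →
          x = 0 ] := by
  tfae_have 1 → 2 := by
    rintro ⟨x, hxU, hmin⟩
    refine ⟨x, hxU, fun v hvU => ?_⟩
    rw [(fhat_hasFDerivAt B x).fderiv]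
    -- the function t ↦ fhat (x + t • v) has a global min at 0
    have hc' : HasDerivAt (fun t : ℝ => x + t • v) v 0 := by
      simpa using ((hasDerivAt_id (0:ℝ)).smul_const v).const_add x
    have hx0 : x + (0:ℝ) • v = x := by simp
    have hg : HasDerivAt (fun t : ℝ => fhat B (x + t • v))
        ((∑ i : (j : Fin d) → Fin (m j), (B i * Real.exp (Lclm i x)) • Lclm i) v) 0 := by
      have := (fhat_hasFDerivAt B (x + (0:ℝ) • v)).comp_hasDerivAt 0 hc'
      rwa [hx0] at this
    have hloc : IsLocalMin (fun t : ℝ => fhat B (x + t • v)) 0 := by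
      apply Filter.Eventually.of_forall
      intro t
      simpa [hx0] using hmin (x + t • v) (add_mem hxU (Submodule.smul_mem _ t hvU))
    exact hloc.hasDerivAt_eq_zero hg
  tfae_have 2 → 4 := by
    rintro ⟨x₀, hx₀U, hcrit⟩ x hx hneg
    have hxU : x ∈ Usub s := hx.1
    have hxperp : x ∈ (Vsub B ⊓ Usub s)ᗮ := hx.2
    have hD : ∑ i : (j : Fin d) → Fin (m j),
        (B i * Real.exp (Lclm i x₀)) * Lclm i x = 0 := by
      have := hcrit x hxU
      rw [(fhat_hasFDerivAt B x₀).fderiv] at this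
      simpa [ContinuousLinearMap.sum_apply, ContinuousLinearMap.smul_apply,
        smul_eq_mul] using this
    have hnp : ∀ i ∈ (Finset.univ : Finset ((j : Fin d) → Fin (m j))),
        (B i * Real.exp (Lclm i x₀)) * Lclm i x ≤ 0 := by
      intro i _
      rcases (hB i).eq_or_lt with h | h
      · rw [← h]; simp
      · have h1 : 0 ≤ B i * Real.exp (Lclm i x₀) :=
          mul_nonneg (hB i) (Real.exp_pos _).le
        have h2 : Lclm i x ≤ 0 := by rw [Lclm_apply]; exact hneg i h
        exact mul_nonpos_iff.mpr (Or.inl ⟨h1, h2⟩)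
    have hz := (Finset.sum_eq_zero_iff_of_nonpos hnp).mp hD
    have hxV : x ∈ Vsub B := by
      intro i hi
      have := hz i (Finset.mem_univ i)
      have hpos : 0 < B i * Real.exp (Lclm i x₀) :=
        mul_pos hi (Real.exp_pos _)
      have := (mul_eq_zero.mp this).resolve_left (ne_of_gt hpos)
      rwa [Lclm_apply] at this
    have : x ∈ (⊥ : Submodule ℝ (EuclideanSpace ℝ ((k : Fin d) × Fin (m k)))) :=
      (Submodule.orthogonal_disjoint (Vsub B ⊓ Usub s)).le_bot
        ⟨Submodule.mem_inf.mpr ⟨hxV, hxU⟩, hxperp⟩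
    exact Submodule.mem_bot ℝ |>.mp this
  tfae_have 4 → 3 := by
    intro h4 x hx hnorm
    classical
    set P : Finset ((j : Fin d) → Fin (m j)) := Finset.univ.filter fun i => 0 < B i with hP
    have hPne : P.Nonempty := by
      have hk : (0 : ℕ) < d := by omega
      have hik : (0 : ℕ) < m ⟨0, hk⟩ := by have := hm ⟨0, hk⟩; omega
      obtain ⟨i, -, hi⟩ := hslice ⟨0, hk⟩ ⟨0, hik⟩
      exact ⟨i, Finset.mem_filter.mpr ⟨Finset.mem_univ i, (hB i).lt_of_ne (Ne.symm hi)⟩⟩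
    set c : ℝ := P.inf' hPne B with hc
    have hcpos : 0 < c := by
      rw [hc, Finset.lt_inf'_iff]
      intro i hi; exact (Finset.mem_filter.mp hi).2
    set N : EuclideanSpace ℝ ((k : Fin d) × Fin (m k)) → ℝ :=
      fun y => ∑ i ∈ P, max (Lclm i y) 0 with hN
    have hNnonneg : ∀ y, 0 ≤ N y := fun y =>
      Finset.sum_nonneg fun i _ => le_max_right _ _
    have hNhom : ∀ (a : ℝ), 0 ≤ a → ∀ y, N (a • y) = a * N y := by
      intro a ha y
      rw [hN]
      simp only [Finset.mul_sum]
      refine Finset.sum_congr rfl fun i _ => ?_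
      rw [map_smul, smul_eq_mul, mul_max_of_nonneg _ _ ha, mul_zero]
    -- the key positivity constant
    have hkey : ∃ ε > 0, ∀ y ∈ V0perp B s, ε * ‖y‖ ≤ N y := by
      set Sset : Set (EuclideanSpace ℝ ((k : Fin d) × Fin (m k))) :=
        {y | y ∈ V0perp B s ∧ ‖y‖ = 1} with hS
      have hSclosed : IsClosed Sset := by
        have : Sset = (V0perp B s : Set _) ∩ Metric.sphere 0 1 := by
          ext y; simp [hS, mem_sphere_zero_iff_norm]
        rw [this]
        exact (Submodule.closed_of_finiteDimensional _).inter Metric.isClosed_sphere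
      have hSbdd : Bornology.IsBounded Sset := by
        apply (Metric.isBounded_closedBall (x := (0:EuclideanSpace ℝ ((k : Fin d) × Fin (m k)))) (r := 1)).subset
        intro y hy
        simp [Metric.mem_closedBall, dist_zero_right, hy.2.le]
      have hScompact : IsCompact Sset :=
        Metric.isCompact_of_isClosed_isBounded hSclosed hSbdd
      rcases Sset.eq_empty_or_nonempty with hSe | hSne
      · refine ⟨1, one_pos, fun y hy => ?_⟩
        have hy0 : y = 0 := by
          by_contra h0
          have hny : ‖y‖ ≠ 0 := norm_ne_zero_iff.mpr h0
          have : (‖y‖⁻¹ • y) ∈ Sset := by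
            refine ⟨Submodule.smul_mem _ _ hy, ?_⟩
            rw [norm_smul, norm_inv, norm_norm, inv_mul_cancel₀ hny]
          rw [hSe] at this; exact this
        rw [hy0, norm_zero, mul_zero]; exact hNnonneg 0
      · have hNcont : Continuous N :=
          continuous_finset_sum _ fun i _ => (Lclm i).continuous.max continuous_const
        obtain ⟨y₀, hy₀S, hy₀min⟩ :=
          hScompact.exists_isMinOn hSne hNcont.continuousOn
        set ε := N y₀ with hε
        have hεpos : 0 < ε := by
          rcases (hNnonneg y₀).eq_or_lt with h | h
          · exfalso
            have hzero : ∀ i ∈ P, max (Lclm i y₀) 0 = 0 := by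
              refine (Finset.sum_eq_zero_iff_of_nonneg
                (fun i _ => le_max_right _ _)).mp h.symm
            have : y₀ = 0 := by
              refine h4 y₀ hy₀S.1 fun i hi => ?_
              have := hzero i (Finset.mem_filter.mpr ⟨Finset.mem_univ i, hi⟩)
              rw [← Lclm_apply]
              by_contra hgt
              push_neg at hgt
              rw [max_eq_left hgt.le] at this
              exact absurd this (ne_of_gt hgt)
            have hn1 : ‖y₀‖ = 1 := hy₀S.2
            rw [this, norm_zero] at hn1
            exact one_ne_zero hn1.symm
          · exact h
        refine ⟨ε, hεpos, fun y hy => ?_⟩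
        rcases eq_or_ne y 0 with rfl | h0
        · rw [norm_zero, mul_zero]; exact hNnonneg 0
        · have hny : ‖y‖ ≠ 0 := norm_ne_zero_iff.mpr h0
          have hmem : (‖y‖⁻¹ • y) ∈ Sset := by
            refine ⟨Submodule.smul_mem _ _ hy, ?_⟩
            rw [norm_smul, norm_inv, norm_norm, inv_mul_cancel₀ hny]
          have h1 : ε ≤ N (‖y‖⁻¹ • y) := hy₀min hmem
          rw [hNhom _ (by positivity) y] at h1
          have h2 := mul_le_mul_of_nonneg_right h1 (norm_nonneg y)
          calc ε * ‖y‖ ≤ ‖y‖⁻¹ * N y * ‖y‖ := h2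
            _ = N y := by field_simp
    obtain ⟨ε, hεpos, hεbound⟩ := hkey
    have hcard : (0 : ℝ) < P.card := by
      exact_mod_cast Finset.card_pos.mpr hPne
    set δ : ℝ := ε / P.card with hδ
    have hδpos : 0 < δ := div_pos hεpos hcard
    -- main lower bound
    have hbound : ∀ y ∈ V0perp B s, 1 ≤ ‖y‖ → c * Real.exp (δ * ‖y‖) ≤ fhat B y := by
      intro y hy hny
      have hNy : ε * ‖y‖ ≤ N y := hεbound y hy
      have hne : (P.card : ℝ) ≠ 0 := ne_of_gt hcard
      have hsum : ∑ _i ∈ P, δ * ‖y‖ ≤ ∑ i ∈ P, max (Lclm i y) 0 := by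
        rw [Finset.sum_const, nsmul_eq_mul]
        calc (P.card : ℝ) * (δ * ‖y‖) = ε * ‖y‖ := by
              rw [hδ, ← mul_assoc, mul_div_cancel₀ _ hne]
          _ ≤ N y := hNy
      obtain ⟨i, hiP, hile⟩ := Finset.exists_le_of_sum_le hPne hsum
      have hδy : 0 < δ * ‖y‖ := mul_pos hδpos (by linarith)
      have hiL : δ * ‖y‖ ≤ Lclm i y := by
        rcases le_or_gt (Lclm i y) 0 with h | h
        · rw [max_eq_right h] at hile; linarith
        · rwa [max_eq_left h.le] at hile
      have hterm : c * Real.exp (δ * ‖y‖) ≤ B i * Real.exp (Lclm i y) := by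
        have hcBi : c ≤ B i := Finset.inf'_le B hiP
        exact mul_le_mul hcBi (Real.exp_le_exp.mpr hiL) (Real.exp_pos _).le (hB i)
      exact hterm.trans (single_le_fhat B hB y i)
    have hev : ∀ᶠ l in Filter.atTop, c * Real.exp (δ * ‖x l‖) ≤ fhat B (x l) :=
      (hnorm.eventually_ge_atTop 1).mono fun l hl => hbound (x l) (hx l) hl
    have htends : Filter.Tendsto (fun l => c * Real.exp (δ * ‖x l‖))
        Filter.atTop Filter.atTop :=
      (Real.tendsto_exp_atTop.comp (hnorm.const_mul_atTop hδpos)).const_mul_atTop hcpos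
    exact Filter.tendsto_atTop_mono' _ hev htends
  tfae_have 3 → 1 := by
    intro h3
    -- fhat is eventually large on V0perp
    have hR : ∃ R : ℝ, ∀ y ∈ V0perp B s, R ≤ ‖y‖ → fhat B 0 ≤ fhat B y := by
      by_contra h
      push_neg at h
      choose x hmem hge hlt using fun n : ℕ => h n
      have hxnorm : Filter.Tendsto (fun n => ‖x n‖) Filter.atTop Filter.atTop :=
        Filter.tendsto_atTop_mono hge tendsto_natCast_atTop_atTop
      have := h3 x hmem hxnorm
      obtain ⟨n, hn⟩ := (this.eventually_gt_atTop (fhat B 0)).exists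
      exact absurd (hlt n) (not_lt.mpr hn.le)
    obtain ⟨R, hR⟩ := hR
    set R' : ℝ := max R 1 with hR'
    set K : Set (EuclideanSpace ℝ ((k : Fin d) × Fin (m k))) :=
      {y | y ∈ V0perp B s ∧ ‖y‖ ≤ R'} with hK
    have hKcompact : IsCompact K := by
      apply Metric.isCompact_of_isClosed_isBounded
      · have : K = (V0perp B s : Set _) ∩ Metric.closedBall 0 R' := by
          ext y; simp [hK, Metric.mem_closedBall, dist_zero_right]
        rw [this]
        exact (Submodule.closed_of_finiteDimensional _).inter Metric.isClosed_closedBall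
      · exact (Metric.isBounded_closedBall (x := (0:EuclideanSpace ℝ ((k : Fin d) × Fin (m k)))) (r := R')).subset
          fun y hy => by simp [Metric.mem_closedBall, dist_zero_right, hy.2]
    have h0K : (0 : EuclideanSpace ℝ ((k : Fin d) × Fin (m k))) ∈ K :=
      ⟨Submodule.zero_mem _, by rw [norm_zero]; exact le_trans zero_le_one (le_max_right R 1)⟩
    obtain ⟨xstar, hxK, hxmin⟩ :=
      hKcompact.exists_isMinOn ⟨0, h0K⟩ (fhat_continuous B).continuousOn
    -- xstar is a global min on V0perp
    have hglob : ∀ y ∈ V0perp B s, fhat B xstar ≤ fhat B y := by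
      intro y hy
      rcases le_or_gt ‖y‖ R' with h | h
      · exact hxmin ⟨hy, h⟩
      · have h1 : fhat B 0 ≤ fhat B y :=
          hR y hy (le_trans (le_max_left R 1) h.le)
        exact le_trans (hxmin h0K) h1
    refine ⟨xstar, hxK.1.1, fun y hyU => ?_⟩
    -- decompose y
    set v : EuclideanSpace ℝ ((k : Fin d) × Fin (m k)) :=
      (Submodule.orthogonalProjectionOnto (Vsub B ⊓ Usub s) y : EuclideanSpace ℝ ((k : Fin d) × Fin (m k))) with hv
    set w := y - v with hw
    have hvmem : v ∈ Vsub B ⊓ Usub s := Submodule.coe_mem _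
    have hwmem : w ∈ V0perp B s := by
      constructor
      · exact Submodule.sub_mem _ hyU (Submodule.mem_inf.mp hvmem).2
      · exact Submodule.sub_starProjection_mem_orthogonal (K := Vsub B ⊓ Usub s) y
    have hyvw : y = v + w := by rw [hw, add_sub_cancel]
    have : fhat B y = fhat B w := by
      rw [hyvw]
      exact fhat_add_of_mem_Vsub B hB (Submodule.mem_inf.mp hvmem).1 w
    rw [this]
    exact hglob w hwmem
  tfae_finish


end
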